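/- Let M be a symmetric positive definite p×p real matrix, S a symmetric positive semidefinite p×p matrix, and D a symmetric positive semidefinite p×p matrix. Then tr((S + εI)^{-1} D) − tr((M + S + εI)^{-1} D) ≥ 0 for any ε > 0 (taking the invertible regularizations), i.e. the numerator of the extended Fellner-Schall update is nonnegative. -/

import Mathlib

open Matrix

/-- Trace of a positive semidefinite real matrix is nonnegative. -/
lemma trace_nonneg_of_posSemidef {n : ℕ} {P : Matrix (Fin n) (Fin n) ℝ}
    (hP : P.PosSemidef) : 0 ≤ P.trace := by
  have h : ∀ i, 0 ≤ P i i := by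
    intro i
    exact hP.diag_nonneg
  exact Finset.sum_nonneg fun i _ => h i

/-- Trace of a product of two psd real matrices is nonnegative. -/
lemma trace_mul_nonneg_of_posSemidef {n : ℕ} {P Q : Matrix (Fin n) (Fin n) ℝ}
    (hP : P.PosSemidef) (hQ : Q.PosSemidef) : 0 ≤ (P * Q).trace := by
  obtain ⟨C, hC⟩ : ∃ C : Matrix (Fin n) (Fin n) ℝ, Q = Cᴴ * C := by
    open scoped MatrixOrder in exact CStarAlgebra.nonneg_iff_eq_star_mul_self.mp hQ.nonneg
  have h1 : (P * Q).trace = (C * P * Cᴴ).trace := by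
    rw [hC, ← mul_assoc, Matrix.trace_mul_cycle]
  rw [h1]
  exact trace_nonneg_of_posSemidef (hP.mul_mul_conjTranspose_same C)

theorem efs_numerator_nonneg {p : ℕ} (M S D : Matrix (Fin p) (Fin p) ℝ)
    (hM : M.PosDef) (hS : S.PosSemidef) (hD : D.PosSemidef)
    (ε : ℝ) (hε : 0 < ε) :
    0 ≤ ((S + ε • 1)⁻¹ * D).trace - ((M + S + ε • 1)⁻¹ * D).trace := by
  set A := S + ε • (1 : Matrix (Fin p) (Fin p) ℝ) with hA_def
  have hEps : (ε • (1 : Matrix (Fin p) (Fin p) ℝ)).PosDef := by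
    constructor
    · show (ε • (1 : Matrix (Fin p) (Fin p) ℝ))ᴴ = _
      simp
    · intro x hx
      exact (Matrix.PosDef.one.smul hε).2 hx
  have hA : A.PosDef := Matrix.PosDef.posSemidef_add hS hEps
  have hBeq : M + S + ε • (1 : Matrix (Fin p) (Fin p) ℝ) = M + A := by
    rw [hA_def, add_assoc]
  set B := M + A with hB_def
  have hB : B.PosDef := hM.add_posSemidef hA.posSemidef
  rw [hBeq]
  -- invertibility
  have hAu : IsUnit A.det := isUnit_iff_ne_zero.mpr hA.det_pos.ne'
  have hBu : IsUnit B.det := isUnit_iff_ne_zero.mpr hB.det_pos.ne'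
  have hA1 : A * A⁻¹ = 1 := Matrix.mul_nonsing_inv A hAu
  have hA1' : A⁻¹ * A = 1 := Matrix.nonsing_inv_mul A hAu
  have hB1 : B * B⁻¹ = 1 := Matrix.mul_nonsing_inv B hBu
  have hB1' : B⁻¹ * B = 1 := Matrix.nonsing_inv_mul B hBu
  -- key identity : A⁻¹ - B⁻¹ = B⁻¹ * (M + M * A⁻¹ * M) * B⁻¹
  have key : A⁻¹ - B⁻¹ = B⁻¹ * (M + M * A⁻¹ * M) * B⁻¹ := by
    have h2 : B * A⁻¹ * B = B + (M + M * A⁻¹ * M) := by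
      rw [hB_def]
      have : (M + A) * A⁻¹ * (M + A)
          = M * A⁻¹ * M + M * (A⁻¹ * A) + (A * A⁻¹) * M + A * A⁻¹ * A := by
        noncomm_ring
      rw [this, hA1, hA1']
      noncomm_ring
    have h3 : B⁻¹ * (B * A⁻¹ * B) * B⁻¹ = A⁻¹ := by
      calc B⁻¹ * (B * A⁻¹ * B) * B⁻¹ = (B⁻¹ * B) * A⁻¹ * (B * B⁻¹) := by noncomm_ring
        _ = A⁻¹ := by rw [hB1', hB1]; noncomm_ring
    calc A⁻¹ - B⁻¹ = B⁻¹ * (B * A⁻¹ * B) * B⁻¹ - B⁻¹ * B * B⁻¹ := by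
          rw [h3, hB1']; noncomm_ring
      _ = B⁻¹ * (B * A⁻¹ * B - B) * B⁻¹ := by noncomm_ring
      _ = B⁻¹ * (M + M * A⁻¹ * M) * B⁻¹ := by rw [h2]; noncomm_ring
  -- positive semidefiniteness of A⁻¹ - B⁻¹
  have hN : (M + M * A⁻¹ * M).PosSemidef := by
    have h1 : (M * A⁻¹ * Mᴴ).PosSemidef := hA.inv.posSemidef.mul_mul_conjTranspose_same M
    rw [hM.isHermitian.eq] at h1
    exact hM.posSemidef.add h1
  have hdiff : (A⁻¹ - B⁻¹).PosSemidef := by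
    rw [key]
    have hBinvH : (B⁻¹)ᴴ = B⁻¹ := hB.inv.isHermitian.eq
    have := hN.conjTranspose_mul_mul_same B⁻¹
    rwa [hBinvH] at this
  have := trace_mul_nonneg_of_posSemidef hdiff hD
  rw [Matrix.sub_mul, Matrix.trace_sub] at this
  linarith
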